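/- (Boshernitzan–Chaika) If {a_i}_{i≥1} is a non-increasing sequence of positive reals with lim_{i→∞} i·a_i = 0, then there exists an irrational α such that for every x ∈ ℝ/ℤ, λ(⋂_{n≥1} ⋃_{i≥n} B(R_α^i x, a_i)) = 0. -/

import Mathlib

open MeasureTheory Filter

noncomputable section

/-- Lebesgue measure on `[0,1)`. -/
def lam : Measure ℝ := volume.restrict (Set.Ico 0 1)

/-- `⋂_{n} ⋃_{i ≥ n} A i`: the set of points lying in `A i` for infinitely many `i`. -/
def limsupSet {α : Type*} (A : ℕ → Set α) : Set α :=
  ⋂ n, ⋃ i, ⋃ _ : n ≤ i, A i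

/-- A sequence of positive reals which is non-increasing with divergent sum. -/
def standardSeq (a : ℕ → ℝ) : Prop :=
  (∀ i, 0 < a i) ∧ (∀ m n, m ≤ n → a n ≤ a m) ∧ ¬ Summable a

/-- The left endpoint of the `j`-th interval determined by the length vector `L`. -/
def pieceLeft {d : ℕ} (L : Fin d → ℝ) (j : Fin d) : ℝ :=
  ∑ k ∈ Finset.univ.filter (fun k => k < j), L k

/-- `x` belongs to the `j`-th interval `I_j = [∑_{k<j} l_k, ∑_{k≤j} l_k)`. -/
def inPiece {d : ℕ} (L : Fin d → ℝ) (j : Fin d) (x : ℝ) : Prop :=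
  pieceLeft L j ≤ x ∧ x < pieceLeft L j + L j

open scoped Classical in
/-- The interval exchange transformation `S_{L,π}` (extended by the identity off `[0,1)`). -/
def iet {d : ℕ} (L : Fin d → ℝ) (π : Equiv.Perm (Fin d)) (x : ℝ) : ℝ :=
  if h : ∃ j, inPiece L j x then
    x - pieceLeft L h.choose + ∑ k ∈ Finset.univ.filter (fun k => π k < π h.choose), L k
  else x

/-- Irreducibility of a permutation: no proper initial segment is invariant. -/
def IrredPerm {d : ℕ} (π : Equiv.Perm (Fin d)) : Prop :=
  ∀ k : Fin d, (k : ℕ) + 1 < d → Finset.image π (Finset.Iic k) ≠ Finset.Iic k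

/-- The simplex of length vectors. -/
def simplexSet (d : ℕ) : Set (Fin d → ℝ) :=
  {L | (∀ i, 0 < L i) ∧ ∑ i, L i = 1}

/-- Normalization of a positive length vector to the simplex. -/
def normLen {d : ℕ} (L : Fin d → ℝ) : Fin d → ℝ := fun i => L i / ∑ j, L j


namespace BCaux

/-! ### The recursive construction -/

def bM (k q : ℕ) : ℕ := 2 ^ k * q ^ (k + 3)

def bEps (k q : ℕ) : ℝ := ((1:ℝ)/2) ^ k / (bM k q)

def MQ (T : ℝ → ℕ) : ℕ → ℕ × ℕ
  | 0 => (1, 2)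
  | (k+1) =>
    let p := MQ T k
    let m' := max (max (p.1 + 1) p.2) (T (bEps k p.2))
    (m', m' * bM k p.2)

variable (T : ℝ → ℕ)

def bm (k : ℕ) : ℕ := (MQ T k).1
def bq (k : ℕ) : ℕ := (MQ T k).2

lemma bm_zero : bm T 0 = 1 := rfl
lemma bq_zero : bq T 0 = 2 := rfl

lemma bm_succ (k : ℕ) :
    bm T (k+1) = max (max (bm T k + 1) (bq T k)) (T (bEps k (bq T k))) := rfl

lemma bq_succ (k : ℕ) : bq T (k+1) = bm T (k+1) * bM k (bq T k) := rfl

lemma one_le_bm (k : ℕ) : 1 ≤ bm T k := by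
  cases k with
  | zero => simp [bm_zero]
  | succ k => rw [bm_succ]; omega

lemma two_le_bq (k : ℕ) : 2 ≤ bq T k := by
  induction k with
  | zero => simp [bq_zero]
  | succ k ih =>
    rw [bq_succ]
    have h1 : 1 ≤ bm T (k+1) := one_le_bm T _
    have h2 : 2 ≤ bM k (bq T k) := by
      have h3 : 2 ≤ bq T k ^ (k+3) :=
        le_trans ih (Nat.le_self_pow (by omega) _)
      calc 2 ≤ bq T k ^ (k+3) := h3
      _ ≤ 2 ^ k * bq T k ^ (k+3) := Nat.le_mul_of_pos_left _ (pow_pos (by norm_num) _)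
    calc 2 ≤ bM k (bq T k) := h2
    _ ≤ bm T (k+1) * bM k (bq T k) := Nat.le_mul_of_pos_left _ (by omega)

lemma bm_lt_succ (k : ℕ) : bm T k < bm T (k+1) := by
  rw [bm_succ]; omega

lemma bm_strictMono : StrictMono (bm T) :=
  strictMono_nat_of_lt_succ (bm_lt_succ T)

lemma thr_le_bm_succ (k : ℕ) : T (bEps k (bq T k)) ≤ bm T (k+1) := by
  rw [bm_succ]; omega

lemma bq_dvd_bM (k : ℕ) : bq T k ∣ bM k (bq T k) :=
  dvd_mul_of_dvd_right (dvd_pow_self _ (by omega)) _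

lemma bq_dvd_succ (k : ℕ) : bq T k ∣ bq T (k+1) := by
  rw [bq_succ]; exact Dvd.dvd.mul_left (bq_dvd_bM T k) _

lemma bq_dvd (k l : ℕ) (h : k ≤ l) : bq T k ∣ bq T l := by
  induction l with
  | zero => simp [Nat.le_zero.mp h]
  | succ l ih =>
    rcases Nat.lt_or_ge k (l+1) with h' | h'
    · exact dvd_trans (ih (by omega)) (bq_dvd_succ T l)
    · have : k = l + 1 := by omega
      simp [this]

lemma two_bq_le_succ (k : ℕ) : 2 * bq T k ≤ bq T (k+1) := by
  rw [bq_succ]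
  have h1 : 1 ≤ bm T (k+1) := one_le_bm T _
  have hq := two_le_bq T k
  have h2 : 2 * bq T k ≤ bM k (bq T k) := by
    unfold bM
    have h3 : bq T k * bq T k ≤ bq T k ^ (k+3) := by
      calc bq T k * bq T k = bq T k ^ 2 := (sq _).symm
      _ ≤ bq T k ^ (k+3) := Nat.pow_le_pow_right (by omega) (by omega)
    calc 2 * bq T k ≤ bq T k * bq T k := by nlinarith
    _ ≤ bq T k ^ (k+3) := h3
    _ ≤ 2 ^ k * bq T k ^ (k+3) := Nat.le_mul_of_pos_left _ (pow_pos (by norm_num) _)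
  calc 2 * bq T k ≤ bM k (bq T k) := h2
  _ ≤ bm T (k+1) * bM k (bq T k) := Nat.le_mul_of_pos_left _ (by omega)

lemma two_pow_le_bq (k : ℕ) : 2 ^ (k+1) ≤ bq T k := by
  induction k with
  | zero => simp [bq_zero]
  | succ k ih =>
    calc 2 ^ (k+2) = 2 * 2 ^ (k+1) := by ring
    _ ≤ 2 * bq T k := by omega
    _ ≤ bq T (k+1) := two_bq_le_succ T k

lemma bq_big (k : ℕ) : 4 * bq T k ^ (k+1) ≤ bq T (k+1) := by
  rw [bq_succ]
  have hq := two_le_bq T k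
  have h1 : 1 ≤ bm T (k+1) := one_le_bm T _
  have h2 : 4 * bq T k ^ (k+1) ≤ bM k (bq T k) := by
    unfold bM
    have h3 : bq T k ^ (k+3) = bq T k ^ (k+1) * bq T k ^ 2 := by ring
    have h4 : 4 ≤ bq T k ^ 2 := by nlinarith
    calc 4 * bq T k ^ (k+1) ≤ bq T k ^ 2 * bq T k ^ (k+1) :=
      Nat.mul_le_mul_right _ h4
    _ = bq T k ^ (k+3) := by ring
    _ ≤ 2 ^ k * bq T k ^ (k+3) := Nat.le_mul_of_pos_left _ (pow_pos (by norm_num) _)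
  calc 4 * bq T k ^ (k+1) ≤ bM k (bq T k) := h2
  _ ≤ bm T (k+1) * bM k (bq T k) := Nat.le_mul_of_pos_left _ (by omega)

/-! ### The number α -/

def u (j : ℕ) : ℝ := ((bq T j : ℝ))⁻¹

lemma u_pos (j : ℕ) : 0 < u T j := by
  have := two_le_bq T j
  unfold u; positivity

lemma u_le_geom (j : ℕ) : u T j ≤ ((1:ℝ)/2) ^ j := by
  have h := two_pow_le_bq T j
  unfold u
  rw [one_div, inv_pow]
  apply inv_anti₀ (by positivity)
  calc ((2:ℝ))^j ≤ ((2^(j+1) : ℕ) : ℝ) := by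
        push_cast; exact pow_le_pow_right₀ (by norm_num) (by omega)
  _ ≤ (bq T j : ℝ) := by exact_mod_cast h

lemma summable_u : Summable (u T) :=
  Summable.of_nonneg_of_le (fun j => (u_pos T j).le) (u_le_geom T) summable_geometric_two

def alphaBC : ℝ := ∑' j, u T j

def tailBC (k : ℕ) : ℝ := ∑' j, u T (j + (k+1))

lemma bq_growth (k j : ℕ) : 2^j * bq T (k+1) ≤ bq T (j + (k+1)) := by
  induction j with
  | zero => simp
  | succ j ih =>
    calc 2^(j+1) * bq T (k+1) = 2 * (2^j * bq T (k+1)) := by ring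
    _ ≤ 2 * bq T (j + (k+1)) := by omega
    _ ≤ bq T (j + (k+1) + 1) := two_bq_le_succ T _
    _ = bq T (j + 1 + (k+1)) := by ring_nf

lemma summable_tail (k : ℕ) : Summable (fun j => u T (j + (k+1))) :=
  (summable_u T).comp_injective (add_left_injective _)

lemma tail_pos (k : ℕ) : 0 < tailBC T k := by
  have h := (summable_tail T k)
  have := Summable.tsum_pos h (fun j => (u_pos T _).le) 0 (u_pos T _)
  simpa [tailBC] using this

lemma tail_le (k : ℕ) : tailBC T k ≤ 2 * u T (k+1) := by
  have hterm : ∀ j, u T (j + (k+1)) ≤ u T (k+1) * ((1:ℝ)/2) ^ j := by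
    intro j
    have h := bq_growth T k j
    have hq1 : (0:ℝ) < bq T (k+1) := by
      exact_mod_cast lt_of_lt_of_le (by norm_num) (two_le_bq T (k+1))
    have hq2 : (0:ℝ) < bq T (j + (k+1)) := by
      exact_mod_cast lt_of_lt_of_le (by norm_num) (two_le_bq T _)
    unfold u
    rw [one_div, inv_pow, ← mul_inv]
    apply inv_anti₀ (by positivity)
    calc (bq T (k+1) : ℝ) * 2^j = ((2^j * bq T (k+1) : ℕ) : ℝ) := by push_cast; ring
    _ ≤ _ := by exact_mod_cast h
  have hs2 : Summable (fun j => u T (k+1) * ((1:ℝ)/2) ^ j) :=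
    summable_geometric_two.mul_left _
  calc tailBC T k ≤ ∑' j, u T (k+1) * ((1:ℝ)/2) ^ j :=
        Summable.tsum_le_tsum hterm (summable_tail T k) hs2
  _ = u T (k+1) * ∑' j, ((1:ℝ)/2) ^ j := tsum_mul_left
  _ = u T (k+1) * 2 := by rw [tsum_geometric_two]
  _ = 2 * u T (k+1) := by ring

def PBC (k : ℕ) : ℕ := ∑ j ∈ Finset.range (k+1), bq T k / bq T j

lemma alpha_sub (k : ℕ) : alphaBC T - (PBC T k : ℝ) / bq T k = tailBC T k := by
  have hq : (0:ℝ) < bq T k := by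
    exact_mod_cast lt_of_lt_of_le (by norm_num) (two_le_bq T k)
  have hP : (PBC T k : ℝ) / bq T k = ∑ j ∈ Finset.range (k+1), u T j := by
    rw [PBC, Nat.cast_sum, Finset.sum_div]
    apply Finset.sum_congr rfl
    intro j hj
    have hd : bq T j ∣ bq T k :=
      bq_dvd T j k (by simpa using Nat.lt_succ_iff.mp (Finset.mem_range.mp hj))
    have hj0 : (bq T j : ℝ) ≠ 0 := by
      have := two_le_bq T j; positivity
    rw [Nat.cast_div hd hj0, u, div_div, mul_comm, ← div_div, div_self hq.ne', one_div]
  rw [hP]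
  have h2 := (Summable.sum_add_tsum_nat_add (f := u T) (k+1) (summable_u T))
  rw [alphaBC, ← h2, tailBC]
  ring

lemma liouville_alpha : Liouville (alphaBC T) := by
  intro n
  have hq : (1:ℝ) < bq T n := by
    exact_mod_cast lt_of_lt_of_le (by norm_num) (two_le_bq T n)
  have hb : (0:ℝ) < bq T n := by linarith
  have hq1 : (0:ℝ) < bq T (n+1) := by
    exact_mod_cast lt_of_lt_of_le (by norm_num) (two_le_bq T (n+1))
  have h2 : 4 * (bq T n:ℝ)^(n+1) ≤ (bq T (n+1) : ℝ) := by
    have := bq_big T n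
    calc 4 * (bq T n:ℝ)^(n+1) = ((4 * bq T n ^ (n+1) : ℕ) : ℝ) := by push_cast; ring
    _ ≤ _ := by exact_mod_cast this
  refine ⟨PBC T n, bq T n,
    by exact_mod_cast lt_of_lt_of_le (by norm_num) (two_le_bq T n), ?_, ?_⟩
  · intro h
    have h' := alpha_sub T n
    rw [show ((PBC T n : ℝ)) / (bq T n : ℝ) = ((PBC T n :ℤ):ℝ)/((bq T n:ℤ):ℝ) by push_cast; ring,
      ← h, sub_self] at h'
    exact (tail_pos T n).ne h'
  · rw [show ((PBC T n :ℤ):ℝ)/((bq T n:ℤ):ℝ) = ((PBC T n : ℝ)) / (bq T n : ℝ) by push_cast; ring,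
      show (1:ℝ)/((bq T n:ℤ):ℝ)^n = 1/((bq T n:ℝ))^n by push_cast; ring,
      alpha_sub T n, abs_of_pos (tail_pos T n)]
    have h1 := tail_le T n
    have hu : u T (n+1) ≤ (4 * (bq T n:ℝ)^(n+1))⁻¹ := by
      rw [u]; exact inv_anti₀ (by positivity) h2
    have key : 2 * u T (n+1) < 1 / (bq T n : ℝ)^n := by
      have h3 : 2 * u T (n+1) ≤ 2 * (4 * (bq T n:ℝ)^(n+1))⁻¹ :=
        mul_le_mul_of_nonneg_left hu (by norm_num)
      have h4 : 2 * (4 * (bq T n:ℝ)^(n+1))⁻¹ = (2 * (bq T n:ℝ)^(n+1))⁻¹ := by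
        rw [mul_inv, mul_inv]; ring
      have h5 : ((bq T n:ℝ))^n < 2 * (bq T n:ℝ)^(n+1) := by
        have : (bq T n:ℝ)^(n+1) = (bq T n:ℝ)^n * (bq T n:ℝ) := pow_succ _ _
        nlinarith [pow_pos hb n]
      have h6 : (2 * (bq T n:ℝ)^(n+1))⁻¹ < ((bq T n:ℝ)^n)⁻¹ :=
        inv_strictAnti₀ (by positivity) h5
      rw [one_div]
      linarith
    linarith

/-! ### Circle lemmas -/

lemma iterate_rot (x : UnitAddCircle) (α : ℝ) (i : ℕ) :
    (fun y => y + (α : UnitAddCircle))^[i] x = x + ((i * α : ℝ) : UnitAddCircle) := by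
  induction i with
  | zero => simp
  | succ i ih =>
    rw [Function.iterate_succ_apply', ih]
    have : ((((i:ℝ)+1) * α : ℝ) : UnitAddCircle)
        = ((i * α : ℝ) : UnitAddCircle) + (α : UnitAddCircle) := by
      rw [← QuotientAddGroup.mk_add]; ring_nf
    push_cast
    rw [this, add_assoc]

lemma dist_coe_le (b c : ℝ) : dist ((b:ℝ) : UnitAddCircle) ((c:ℝ) : UnitAddCircle) ≤ |b - c| := by
  rw [dist_eq_norm, ← QuotientAddGroup.mk_sub]
  simpa using QuotientAddGroup.norm_mk_le_norm (S := AddSubgroup.zmultiples (1:ℝ)) (m := b - c)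

lemma coe_nat_add (n : ℕ) (y : ℝ) : (((n : ℝ) + y : ℝ) : UnitAddCircle) = (y : UnitAddCircle) := by
  rw [QuotientAddGroup.mk_add]
  have : (((n:ℝ)) : UnitAddCircle) = 0 := by
    induction n with
    | zero => simp
    | succ n ih =>
      push_cast
      rw [QuotientAddGroup.mk_add, ih, zero_add]
      exact AddCircle.coe_period 1
  rw [this, zero_add]

lemma ball_vol (x : UnitAddCircle) (r : ℝ) :
    volume (Metric.ball x r) ≤ ENNReal.ofReal (2 * r) := by
  refine le_trans (measure_mono Metric.ball_subset_closedBall) ?_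
  rw [AddCircle.volume_closedBall]
  exact ENNReal.ofReal_le_ofReal (min_le_right _ _)

lemma bM_def (k q : ℕ) : bM k q = 2 ^ k * q ^ (k + 3) := rfl
lemma bEps_def (k q : ℕ) : bEps k q = ((1:ℝ)/2) ^ k / (bM k q) := rfl
lemma u_def (T : ℝ → ℕ) (j : ℕ) : u T j = ((bq T j : ℝ))⁻¹ := rfl

end BCaux

set_option maxHeartbeats 2000000 in
/-- Boshernitzan–Chaika: if `i * a i → 0` there is a rotation all of whose
limsup sets are null. -/
theorem exists_rotation_null_limsup (a : ℕ → ℝ) (hpos : ∀ i, 0 < a i)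
    (hmono : ∀ m n, m ≤ n → a n ≤ a m)
    (hlim : Filter.Tendsto (fun i : ℕ => (i : ℝ) * a i) Filter.atTop (nhds 0)) :
    ∃ α : ℝ, Irrational α ∧ ∀ x : UnitAddCircle,
      volume (limsupSet fun i =>
        Metric.ball ((fun y => y + (α : UnitAddCircle))^[i] x) (a i)) = 0 := by
  classical
  have hthr : ∀ ε : ℝ, ∃ N : ℕ, 0 < ε → ∀ m, N ≤ m → (m:ℝ) * a m ≤ ε := by
    intro ε
    by_cases hε : 0 < ε
    · have h2 := hlim.eventually (eventually_le_nhds hε)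
      obtain ⟨N, hN⟩ := eventually_atTop.mp h2
      exact ⟨N, fun _ m hm => hN m hm⟩
    · exact ⟨0, fun h => absurd h hε⟩
  choose T hT using hthr
  refine ⟨BCaux.alphaBC T, (BCaux.liouville_alpha T).irrational, ?_⟩
  intro x
  set α := BCaux.alphaBC T with hα
  set q := BCaux.bq T with hqdef
  set m := BCaux.bm T with hmdef
  have hq2 : ∀ k, (2:ℝ) ≤ q k := fun k => by exact_mod_cast BCaux.two_le_bq T k
  have hqpos : ∀ k, (0:ℝ) < q k := fun k => lt_of_lt_of_le (by norm_num) (hq2 k)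
  have hqposn : ∀ k, 0 < q k := fun k => lt_of_lt_of_le (by norm_num) (BCaux.two_le_bq T k)
  have hMpos : ∀ k, (0:ℝ) < (BCaux.bM k (q k) : ℝ) := by
    intro k
    rw [BCaux.bM_def]
    have := hqposn k
    positivity
  set A : ℕ → Set UnitAddCircle :=
    fun i => Metric.ball (x + ((i * α : ℝ) : UnitAddCircle)) (a i) with hA
  have hAeq : (fun i => Metric.ball ((fun y => y + (α : UnitAddCircle))^[i] x) (a i)) = A := by
    funext i; rw [BCaux.iterate_rot]
  rw [hAeq]
  set s : ℕ → Set UnitAddCircle := fun k => ⋃ i ∈ Finset.Ico (m k) (m (k+1)), A i with hs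
  set r : ℕ → ℝ := fun k => a (m k) + 2 / (BCaux.bM k (q k) : ℝ) with hr
  -- center distance estimate
  have hcent : ∀ k i, m k ≤ i → i < m (k+1) →
      dist (x + ((i * α : ℝ) : UnitAddCircle))
        (x + ((((i * BCaux.PBC T k) % q k : ℕ) / (q k : ℝ) : ℝ) : UnitAddCircle))
        ≤ 2 / (BCaux.bM k (q k) : ℝ) := by
    intro k i _ hi2
    rw [dist_add_left]
    set P := BCaux.PBC T k with hP
    set j : ℕ := (i * P) % q k with hj
    have hsplit : ((i * P : ℕ):ℝ) / (q k:ℝ) = ((i * P / q k : ℕ) : ℝ) + (j:ℝ)/(q k:ℝ) := by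
      have hdm := Nat.div_add_mod (i * P) (q k)
      have : ((i * P : ℕ):ℝ) = (q k : ℝ) * ((i * P / q k : ℕ):ℝ) + (j:ℝ) := by
        exact_mod_cast congrArg (Nat.cast : ℕ → ℝ) hdm.symm
      rw [this, add_div, mul_comm, mul_div_assoc, div_self (hqpos k).ne', mul_one]
    have hcoe : ((((j:ℕ) : ℝ) / (q k : ℝ) : ℝ) : UnitAddCircle)
        = (((i * P : ℕ):ℝ) / (q k:ℝ) : ℝ) := by
      rw [hsplit, BCaux.coe_nat_add]
    rw [hcoe]
    refine le_trans (BCaux.dist_coe_le _ _) ?_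
    have hiP : ((i * P : ℕ):ℝ) / (q k:ℝ) = (i:ℝ) * ((P:ℝ)/(q k:ℝ)) := by
      push_cast; ring
    rw [hiP, ← mul_sub, abs_mul, Nat.abs_cast]
    have htp := BCaux.tail_pos T k
    have hts : α - (P:ℝ)/(q k:ℝ) = BCaux.tailBC T k := BCaux.alpha_sub T k
    rw [hts, abs_of_pos htp]
    have hle1 : (i:ℝ) ≤ (m (k+1) : ℝ) := by exact_mod_cast hi2.le
    have h2u : BCaux.tailBC T k ≤ 2 * BCaux.u T (k+1) := BCaux.tail_le T k
    have hqs : (q (k+1) : ℝ) = (m (k+1):ℝ) * (BCaux.bM k (q k) : ℝ) := by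
      exact_mod_cast BCaux.bq_succ T k
    have hu : BCaux.u T (k+1) = ((q (k+1) : ℝ))⁻¹ := BCaux.u_def T (k+1)
    have hm1 : (0:ℝ) < (m (k+1) : ℝ) := by
      exact_mod_cast lt_of_lt_of_le (by norm_num) (BCaux.one_le_bm T (k+1))
    calc (i:ℝ) * BCaux.tailBC T k ≤ (m (k+1):ℝ) * (2 * BCaux.u T (k+1)) := by
          apply mul_le_mul hle1 h2u htp.le hm1.le
    _ = 2 / (BCaux.bM k (q k) : ℝ) := by
          rw [hu, hqs, mul_inv,
            show (m (k+1):ℝ) * (2 * ((m (k+1):ℝ)⁻¹ * ((BCaux.bM k (q k):ℝ))⁻¹))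
              = ((m (k+1):ℝ) * (m (k+1):ℝ)⁻¹) * (2 * ((BCaux.bM k (q k):ℝ))⁻¹) from by ring,
            mul_inv_cancel₀ hm1.ne', one_mul, div_eq_mul_inv]
  -- block cover
  have hcov : ∀ k, s k ⊆ ⋃ j ∈ Finset.range (q k),
      Metric.ball (x + (((j:ℝ) / (q k : ℝ) : ℝ) : UnitAddCircle)) (r k) := by
    intro k y hy
    rw [hs] at hy
    simp only [Set.mem_iUnion, exists_prop] at hy
    obtain ⟨i, hi, hyi⟩ := hy
    rw [Finset.mem_Ico] at hi
    set j : ℕ := (i * BCaux.PBC T k) % q k with hj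
    have hjlt : j < q k := Nat.mod_lt _ (hqposn k)
    have hsub : A i ⊆ Metric.ball (x + (((j:ℝ) / (q k : ℝ) : ℝ) : UnitAddCircle)) (r k) := by
      rw [hA]
      apply Metric.ball_subset_ball'
      have := hcent k i hi.1 hi.2
      have hai : a i ≤ a (m k) := hmono _ _ hi.1
      rw [hr]
      dsimp only
      linarith
    simp only [Set.mem_iUnion, exists_prop]
    exact ⟨j, Finset.mem_range.mpr hjlt, hsub hyi⟩
  -- volume bound per block
  have hvol : ∀ k, volume (s k) ≤ ENNReal.ofReal ((q k : ℝ) * (2 * r k)) := by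
    intro k
    refine le_trans (measure_mono (hcov k)) ?_
    refine le_trans (measure_biUnion_finset_le _ _) ?_
    calc ∑ j ∈ Finset.range (q k),
          volume (Metric.ball (x + (((j:ℝ) / (q k : ℝ) : ℝ) : UnitAddCircle)) (r k))
        ≤ ∑ j ∈ Finset.range (q k), ENNReal.ofReal (2 * r k) :=
          Finset.sum_le_sum (fun j _ => BCaux.ball_vol _ _)
    _ = ((q k : ℕ) : ENNReal) * ENNReal.ofReal (2 * r k) := by
          simp [Finset.sum_const, nsmul_eq_mul]
    _ = ENNReal.ofReal ((q k : ℝ) * (2 * r k)) := by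
          rw [ENNReal.ofReal_mul (by positivity : (0:ℝ) ≤ (q k:ℝ))]
          congr 1
          exact (ENNReal.ofReal_natCast _).symm
  -- real bound
  have hrk : ∀ k', (q (k'+1) : ℝ) * (2 * r (k'+1)) ≤ 5 * ((1:ℝ)/2)^(k'+1) := by
    intro k'
    set k := k' + 1
    have hQ : (q k : ℝ) = (m k : ℝ) * (BCaux.bM k' (q k') : ℝ) := by
      exact_mod_cast BCaux.bq_succ T k'
    have hMp := hMpos k'
    have hMp2 := hMpos k
    have hEpos : 0 < BCaux.bEps k' (q k') := by
      rw [BCaux.bEps_def]; positivity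
    have hma : (m k : ℝ) * a (m k) ≤ BCaux.bEps k' (q k') :=
      hT _ hEpos _ (BCaux.thr_le_bm_succ T k')
    have hqa : (q k : ℝ) * a (m k) ≤ ((1:ℝ)/2)^k' := by
      have : (q k : ℝ) * a (m k) = (BCaux.bM k' (q k') : ℝ) * ((m k : ℝ) * a (m k)) := by
        rw [hQ]; ring
      rw [this]
      calc (BCaux.bM k' (q k') : ℝ) * ((m k : ℝ) * a (m k))
          ≤ (BCaux.bM k' (q k') : ℝ) * BCaux.bEps k' (q k') :=
            mul_le_mul_of_nonneg_left hma hMp.le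
      _ = ((1:ℝ)/2)^k' := by rw [BCaux.bEps_def]; field_simp
    have hsecond : (q k : ℝ) * (2 * (2 / (BCaux.bM k (q k) : ℝ))) ≤ ((1:ℝ)/2)^k := by
      have hbm : (BCaux.bM k (q k) : ℝ) = 2^k * (q k:ℝ)^(k+3) := by
        rw [BCaux.bM_def]; push_cast; ring
      rw [hbm]
      have hqk := hq2 k
      have hqkp := hqpos k
      have hq4 : (4:ℝ) ≤ (q k:ℝ)^(k+2) := by
        calc (4:ℝ) = 2^2 := by norm_num
        _ ≤ (q k:ℝ)^2 := by nlinarith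
        _ ≤ (q k:ℝ)^(k+2) := pow_le_pow_right₀ (by linarith) (by omega)
      have hpk3 : (q k:ℝ)^(k+3) = (q k:ℝ) * (q k:ℝ)^(k+2) := by ring
      rw [hpk3]
      have h2k : (0:ℝ) < 2^k := by positivity
      have hqk2 : (0:ℝ) < (q k:ℝ)^(k+2) := by positivity
      rw [div_eq_mul_inv, mul_inv, mul_inv]
      have : (q k:ℝ) * (2 * (2 * ((2^k:ℝ)⁻¹ * ((q k:ℝ)⁻¹ * ((q k:ℝ)^(k+2))⁻¹))))
          = 4 * (2^k:ℝ)⁻¹ * ((q k:ℝ)^(k+2))⁻¹ := by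
        field_simp
        ring
      rw [this]
      calc 4 * ((2:ℝ)^k)⁻¹ * ((q k:ℝ)^(k+2))⁻¹ ≤ 4 * ((2:ℝ)^k)⁻¹ * 4⁻¹ := by
            apply mul_le_mul_of_nonneg_left (inv_anti₀ (by norm_num) hq4) (by positivity)
      _ = ((2:ℝ))⁻¹^k := by rw [inv_pow]; ring
      _ = ((1:ℝ)/2)^k := by rw [one_div]
    have hexp : ((1:ℝ)/2)^k' = 2 * ((1:ℝ)/2)^k := by
      rw [show k = k' + 1 from rfl, pow_succ]; ring
    have : (q k : ℝ) * (2 * r k) = 2 * ((q k:ℝ) * a (m k)) + (q k : ℝ) * (2 * (2 / (BCaux.bM k (q k) : ℝ))) := by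
      rw [hr]; ring
    rw [this]
    calc 2 * ((q k:ℝ) * a (m k)) + (q k : ℝ) * (2 * (2 / (BCaux.bM k (q k) : ℝ)))
        ≤ 2 * ((1:ℝ)/2)^k' + ((1:ℝ)/2)^k := by
          have := mul_le_mul_of_nonneg_left hqa (by norm_num : (0:ℝ) ≤ 2)
          linarith
    _ = 4 * ((1:ℝ)/2)^k + ((1:ℝ)/2)^k := by rw [hexp]; ring
    _ = 5 * ((1:ℝ)/2)^k := by ring
  -- summability
  have hbound : ∀ k, volume (s k) ≤ ENNReal.ofReal (5 * ((1:ℝ)/2)^k) := by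
    intro k
    cases k with
    | zero =>
      calc volume (s 0) ≤ volume Set.univ := measure_mono (Set.subset_univ _)
      _ = 1 := by rw [AddCircle.measure_univ]; norm_num
      _ ≤ ENNReal.ofReal (5 * ((1:ℝ)/2)^0) := by
          rw [show (5:ℝ) * ((1:ℝ)/2)^0 = 5 by norm_num]
          exact ENNReal.one_le_ofReal.mpr (by norm_num)
    | succ k' => exact le_trans (hvol (k'+1)) (ENNReal.ofReal_le_ofReal (hrk k'))
  have hsum : (∑' k, volume (s k)) ≠ ⊤ := by
    have h1 : (∑' k, volume (s k)) ≤ ∑' k : ℕ, ENNReal.ofReal (5 * ((1:ℝ)/2)^k) :=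
      ENNReal.tsum_le_tsum hbound
    have h2 : (∑' k : ℕ, ENNReal.ofReal (5 * ((1:ℝ)/2)^k))
        = ENNReal.ofReal (∑' k : ℕ, 5 * ((1:ℝ)/2)^k) :=
      (ENNReal.ofReal_tsum_of_nonneg (fun k => by positivity)
        ((summable_geometric_two).mul_left 5)).symm
    rw [h2] at h1
    exact (lt_of_le_of_lt h1 ENNReal.ofReal_lt_top).ne
  have hBC : volume (limsup s atTop) = 0 := measure_limsup_atTop_eq_zero hsum
  -- limsupSet A ⊆ limsup s atTop
  have hlimeq : limsup s atTop = limsupSet s := by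
    rw [limsup_eq_iInf_iSup_of_nat]
    rfl
  have hsubset : limsupSet A ⊆ limsupSet s := by
    intro y hy
    simp only [limsupSet, Set.mem_iInter, Set.mem_iUnion, exists_prop] at hy ⊢
    intro K
    obtain ⟨i, hiK, hyA⟩ := hy (m K)
    have hm0 : m 0 = 1 := BCaux.bm_zero T
    have hmono0 : m 0 ≤ m K := (BCaux.bm_strictMono T).monotone (Nat.zero_le _)
    have h1i : 1 ≤ i := by omega
    obtain ⟨k, hk⟩ : ∃ k, Nat.findGreatest (fun t => m t ≤ i) i = k := ⟨_, rfl⟩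
    have hk1 : m k ≤ i := by
      rw [← hk]
      exact Nat.findGreatest_spec (P := fun t => m t ≤ i) (Nat.zero_le i) (show m 0 ≤ i by omega)
    have hk2 : i < m (k+1) := by
      by_contra h
      push_neg at h
      have hik : k + 1 ≤ i := le_trans (StrictMono.le_apply (BCaux.bm_strictMono T)) h
      have h2 : k + 1 ≤ Nat.findGreatest (fun t => m t ≤ i) i :=
        Nat.le_findGreatest hik h
      omega
    have hKk : K ≤ k := by
      by_contra h
      push_neg at h
      have h2 : m (k+1) ≤ m K := (BCaux.bm_strictMono T).monotone (by omega)
      omega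
    refine ⟨k, hKk, ?_⟩
    rw [hs]
    simp only [Set.mem_iUnion, exists_prop]
    exact ⟨i, Finset.mem_Ico.mpr ⟨hk1, hk2⟩, hyA⟩
  have hfin : volume (limsupSet A) ≤ 0 := by
    calc volume (limsupSet A) ≤ volume (limsup s atTop) := by
          rw [hlimeq]; exact measure_mono hsubset
    _ = 0 := hBC
  exact le_antisymm hfin (zero_le)

end
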